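/- For any N ∈ ℕ*, z₁,…,z_N in the open unit disk 𝔻 ⊂ ℂ and d₁,…,d_N ∈ ℤ, the series identity Σ_{n=1}^∞ (1/n) |Σ_{j=1}^N d_j z_jⁿ|² = − Σ_{j=1}^N d_j² ln(1−|z_j|²) − Σ_{i≠j} d_i d_j ln|1−z_i z̄_j| holds (both sides being finite). -/

import Mathlib

noncomputable section

open Complex

/-- **Series identity.** For `z₁,…,z_N` in the open unit disk and `d₁,…,d_N ∈ ℤ`,
`Σ_{n≥1} (1/n)|Σ_j d_j z_jⁿ|² = −Σ_j d_j² ln(1−|z_j|²) − Σ_{i≠j} d_i d_j ln|1−z_i z̄_j|`,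
both sides being finite. -/
theorem series_identity (N : ℕ) (hN : 0 < N) (z : Fin N → ℂ)
    (hz : ∀ j, ‖z j‖ < 1) (d : Fin N → ℤ) :
    Summable (fun n : ℕ =>
      (1 / (n + 1 : ℝ)) * ‖∑ j, (d j : ℂ) * z j ^ (n + 1)‖ ^ 2) ∧
    ∑' n : ℕ, (1 / (n + 1 : ℝ)) * ‖∑ j, (d j : ℂ) * z j ^ (n + 1)‖ ^ 2
      = -(∑ j, (d j : ℝ) ^ 2 * Real.log (1 - ‖z j‖ ^ 2))
        - ∑ i, ∑ j ∈ Finset.univ.filter (fun j => j ≠ i),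
            (d i : ℝ) * (d j : ℝ) * Real.log ‖1 - z i * (starRingEnd ℂ) (z j)‖ := by
  set w : Fin N → Fin N → ℂ := fun i j => z i * (starRingEnd ℂ) (z j) with hw
  have hwlt : ∀ i j, ‖w i j‖ < 1 := by
    intro i j
    have h1 := norm_nonneg (z i)
    have h2 := norm_nonneg (z j)
    calc ‖w i j‖ = ‖z i‖ * ‖z j‖ := by
          simp [hw]
      _ < 1 := by nlinarith [hz i, hz j]
  -- basic hasSum for each pair
  have key : ∀ i j : Fin N, HasSum
      (fun n : ℕ => (d i : ℝ) * (d j : ℝ) * ((w i j ^ (n+1)).re / (n+1)))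
      ((d i : ℝ) * (d j : ℝ) * (-Real.log (‖1 - w i j‖))) := by
    intro i j
    have h0 := hasSum_taylorSeries_neg_log (hwlt i j)
    have h1 : HasSum (fun n : ℕ => w i j ^ (n+1) / (((n+1 : ℕ) : ℂ)))
        (-Complex.log (1 - w i j)) := by
      apply (hasSum_nat_add_iff (f := fun n : ℕ => w i j ^ n / n) 1).2
      convert h0 using 1
      · rfl
      · simp
    have h2 := Complex.hasSum_re h1
    have h3 : (fun n : ℕ => (w i j ^ (n+1) / (((n+1 : ℕ) : ℂ))).re)
        = fun n : ℕ => (w i j ^ (n+1)).re / (n+1) := by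
      funext n
      rw [show (((n+1:ℕ)):ℂ) = ((n+1:ℝ):ℂ) by push_cast; ring, Complex.div_ofReal_re]
    rw [h3] at h2
    have h4 : (-Complex.log (1 - w i j)).re = -Real.log (‖1 - w i j‖) := by
      rw [Complex.neg_re, Complex.log_re]
    rw [h4] at h2
    exact h2.mul_left _
  -- total hasSum
  have total : HasSum
      (fun n : ℕ => ∑ i, ∑ j, (d i : ℝ) * (d j : ℝ) * ((w i j ^ (n+1)).re / (n+1)))
      (∑ i, ∑ j, (d i : ℝ) * (d j : ℝ) * (-Real.log (‖1 - w i j‖))) :=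
    hasSum_sum fun i _ => hasSum_sum fun j _ => key i j
  -- pointwise identification with LHS
  have hpt : ∀ n : ℕ, (∑ i, ∑ j, (d i : ℝ) * (d j : ℝ) * ((w i j ^ (n+1)).re / (n+1)))
      = (1 / (n + 1 : ℝ)) * ‖∑ j, (d j : ℂ) * z j ^ (n + 1)‖ ^ 2 := by
    intro n
    set s := ∑ j, (d j : ℂ) * z j ^ (n + 1) with hs
    have h1 : ‖s‖^2 = (s * (starRingEnd ℂ) s).re := by
      rw [Complex.mul_conj, Complex.ofReal_re, Complex.sq_norm]
    have h2 : s * (starRingEnd ℂ) s = ∑ i, ∑ j, ((d i : ℂ) * (d j : ℂ)) * (w i j)^(n+1) := by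
      rw [hs, map_sum, Finset.sum_mul_sum]
      refine Finset.sum_congr rfl fun i _ => Finset.sum_congr rfl fun j _ => ?_
      simp only [map_mul, map_pow, map_intCast, hw, mul_pow]
      ring
    rw [h1, h2, Complex.re_sum, Finset.mul_sum]
    refine Finset.sum_congr rfl fun i _ => ?_
    rw [Complex.re_sum, Finset.mul_sum]
    refine Finset.sum_congr rfl fun j _ => ?_
    have h5 : (((d i : ℂ) * (d j : ℂ)) * (w i j)^(n+1)).re
        = (d i : ℝ) * (d j : ℝ) * ((w i j)^(n+1)).re := by
      rw [show ((d i : ℂ) * (d j : ℂ)) = (((d i : ℝ) * (d j : ℝ) : ℝ) : ℂ) by push_cast; ring,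
        Complex.re_ofReal_mul]
    rw [h5]
    ring
  have totalLHS : HasSum
      (fun n : ℕ => (1 / (n + 1 : ℝ)) * ‖∑ j, (d j : ℂ) * z j ^ (n + 1)‖ ^ 2)
      (∑ i, ∑ j, (d i : ℝ) * (d j : ℝ) * (-Real.log (‖1 - w i j‖))) := by
    convert total using 1
    funext n; exact (hpt n).symm
  refine ⟨totalLHS.summable, ?_⟩
  rw [totalLHS.tsum_eq]
  -- identify the sum with the RHS
  have hdiag : ∀ i : Fin N, ‖1 - w i i‖ = 1 - ‖z i‖ ^ 2 := by
    intro i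
    have hww : w i i = ((‖z i‖ ^ 2 : ℝ) : ℂ) := by
      show z i * (starRingEnd ℂ) (z i) = _
      rw [Complex.mul_conj, Complex.normSq_eq_norm_sq]
    rw [hww, ← Complex.ofReal_one, ← Complex.ofReal_sub, Complex.norm_real, Real.norm_eq_abs]
    exact abs_of_nonneg (by nlinarith [hz i, norm_nonneg (z i)])
  have hrow : ∀ i : Fin N, (∑ j, (d i : ℝ) * (d j : ℝ) * (-Real.log (‖1 - w i j‖)))
      = -((d i : ℝ)^2 * Real.log (1 - ‖z i‖^2))
        + -(∑ j ∈ Finset.univ.filter (fun j => j ≠ i),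
            (d i : ℝ) * (d j : ℝ) * Real.log (‖1 - w i j‖)) := by
    intro i
    rw [Finset.filter_ne', ← Finset.add_sum_erase _ _ (Finset.mem_univ i), hdiag i]
    congr 1
    · ring
    · rw [← Finset.sum_neg_distrib]
      exact Finset.sum_congr rfl fun j _ => by ring
  rw [Finset.sum_congr rfl fun i _ => hrow i, Finset.sum_add_distrib, sub_eq_add_neg,
    ← Finset.sum_neg_distrib, ← Finset.sum_neg_distrib]
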